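/- Let α and β be types, R a finite type with Fintype.card R ≤ 2^s for a natural number s, p a probability mass function on R, and A : List α → R → List β a function satisfying: (i) for all σ and r, (A σ r).length = σ.length, and (ii) for all σ, τ, r, the list A σ r is a prefix of A (σ ++ τ) r. Fix any natural number k ≥ 1. Then for every r ∈ R with p(r) > 2^{−(s+2)} there exists a list σ* with σ*.length ≤ (2s + 3)·k such that for every list a : List α with a.length = k there exists a list b : List β with b.length = k and 3 · p({r' : A (σ* ++ a) r' = (A σ* r) ++ b}) ≥ 2 · p({r' : A σ* r' = A σ* r}). -/

import Mathlib

open scoped ENNReal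

/-- Converting a random-start algorithm into a pseudo-deterministic one:
if `A` is an online algorithm with seed space `R` of at most `2^s` seeds, then
for every seed `r` of probability greater than `2^{-(s+2)}` there is a partial
stream `σ*` of length at most `(2s+3)·k` such that for every next block `a` of
`k` items some output block `b` of length `k` is produced with conditional
probability at least `2/3` given the output history. -/
theorem stmt_7 {α β : Type*} (s : ℕ) (R : Type*) [Fintype R]
    (hR : Fintype.card R ≤ 2 ^ s) (p : PMF R)
    (A : List α → R → List β)
    (hlen : ∀ (σ : List α) (r : R), (A σ r).length = σ.length)
    (hprefix : ∀ (σ τ : List α) (r : R), (A σ r) <+: (A (σ ++ τ) r))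
    (k : ℕ) (hk : 1 ≤ k) :
    ∀ r : R, p r > 2 ^ (-(s + 2 : ℤ)) →
      ∃ σstar : List α, σstar.length ≤ (2 * s + 3) * k ∧
        ∀ a : List α, a.length = k →
          ∃ b : List β, b.length = k ∧
            3 * p.toOuterMeasure {r' : R | A (σstar ++ a) r' = (A σstar r) ++ b}
              ≥ 2 * p.toOuterMeasure {r' : R | A σstar r' = A σstar r} := by
  intro r hr
  by_contra hcon
  push_neg at hcon
  set μ : List α → ℝ≥0∞ := fun σ => p.toOuterMeasure {r' : R | A σ r' = A σ r} with hμ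
  -- r is always in the set, so μ σ ≥ p r
  have hrmem : ∀ σ : List α, p r ≤ μ σ := by
    intro σ
    calc p r = p.toOuterMeasure {r} := (p.toOuterMeasure_apply_singleton r).symm
    _ ≤ μ σ := p.toOuterMeasure.mono (by simp [Set.singleton_subset_iff, Set.mem_setOf_eq])
  -- μ [] = 1
  have hμnil : μ [] = 1 := by
    have : {r' : R | A [] r' = A [] r} = Set.univ := by
      ext r'
      simp only [Set.mem_setOf_eq, Set.mem_univ, iff_true]
      have h1 : (A [] r').length = 0 := hlen [] r'
      have h2 : (A [] r).length = 0 := hlen [] r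
      rw [List.length_eq_zero_iff.mp h1, List.length_eq_zero_iff.mp h2]
    rw [hμ]
    simp only [this]
    exact (p.toOuterMeasure_apply_eq_one_iff _).2 (Set.subset_univ _)
  -- key shrinking step
  have key : ∀ σ : List α, σ.length ≤ (2 * s + 3) * k →
      ∃ a : List α, a.length = k ∧ 3 * μ (σ ++ a) < 2 * μ σ := by
    intro σ hσ
    obtain ⟨a, ha, hba⟩ := hcon σ hσ
    obtain ⟨b, hb⟩ := hprefix σ a r
    have hbl : b.length = k := by
      have := hlen (σ ++ a) r
      rw [← hb] at this
      simp only [List.length_append, hlen σ r, ha] at this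
      omega
    refine ⟨a, ha, ?_⟩
    have := hba b hbl
    rwa [hb] at this
  -- iterate
  have main : ∀ t : ℕ, t ≤ 2 * s + 4 →
      ∃ σ : List α, σ.length = t * k ∧ 3 ^ t * μ σ ≤ 2 ^ t := by
    intro t
    induction t with
    | zero => intro _; exact ⟨[], by simp, by simp [hμnil]⟩
    | succ t ih =>
      intro ht
      obtain ⟨σ, hσl, hσ⟩ := ih (by omega)
      have hlt : σ.length ≤ (2 * s + 3) * k := by
        rw [hσl]; exact Nat.mul_le_mul_right k (by omega)
      obtain ⟨a, ha, hstep⟩ := key σ hlt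
      refine ⟨σ ++ a, by simp [hσl, ha]; ring, ?_⟩
      calc 3 ^ (t + 1) * μ (σ ++ a) = 3 ^ t * (3 * μ (σ ++ a)) := by ring
      _ ≤ 3 ^ t * (2 * μ σ) := mul_le_mul_right hstep.le _
      _ = 2 * (3 ^ t * μ σ) := by ring
      _ ≤ 2 * 2 ^ t := mul_le_mul_right hσ _
      _ = 2 ^ (t + 1) := by ring
  obtain ⟨σ, _, hfin⟩ := main (2 * s + 4) le_rfl
  -- derive numeric contradiction
  have h1 : (3 : ℝ≥0∞) ^ (2 * s + 4) * p r ≤ 2 ^ (2 * s + 4) :=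
    le_trans (mul_le_mul_right (hrmem σ) _) hfin
  have h30 : (3 : ℝ≥0∞) ^ (2 * s + 4) ≠ 0 := by positivity
  have h3t : (3 : ℝ≥0∞) ^ (2 * s + 4) ≠ ⊤ := by
    exact ENNReal.pow_ne_top (by norm_num)
  have h2 : (3 : ℝ≥0∞) ^ (2 * s + 4) * 2 ^ (-(s + 2 : ℤ)) < 2 ^ (2 * s + 4) :=
    lt_of_lt_of_le ((ENNReal.mul_lt_mul_iff_right h30 h3t).2 hr) h1
  have hz : (2 : ℝ≥0∞) ^ (-(s + 2 : ℤ)) * 2 ^ (s + 2 : ℕ) = 1 := by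
    rw [← zpow_natCast (2 : ℝ≥0∞) (s + 2), ← ENNReal.zpow_add (by norm_num) (by norm_num)]
    have he : -(s + 2 : ℤ) + ((s + 2 : ℕ) : ℤ) = 0 := by push_cast; ring
    rw [he, zpow_zero]
  have h3 : (3 : ℝ≥0∞) ^ (2 * s + 4) < 2 ^ (2 * s + 4) * 2 ^ (s + 2) := by
    have hmul := ENNReal.mul_lt_mul_left (a := (2 : ℝ≥0∞) ^ (s + 2 : ℕ))
      (pow_ne_zero _ (by norm_num)) (ENNReal.pow_ne_top (by norm_num)) h2
    calc (3 : ℝ≥0∞) ^ (2 * s + 4)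
        = 3 ^ (2 * s + 4) * (2 ^ (-(s + 2 : ℤ)) * 2 ^ (s + 2 : ℕ)) := by rw [hz, mul_one]
      _ = 3 ^ (2 * s + 4) * 2 ^ (-(s + 2 : ℤ)) * 2 ^ (s + 2 : ℕ) := by ring
      _ < 2 ^ (2 * s + 4) * 2 ^ (s + 2) := hmul
  have h4 : (3 : ℝ≥0∞) ^ (2 * s + 4) < 2 ^ (3 * s + 6) := by
    rw [show (2 : ℝ≥0∞) ^ (3 * s + 6) = 2 ^ (2 * s + 4) * 2 ^ (s + 2) by
      rw [← pow_add]; ring_nf]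
    exact h3
  have h5 : (3 : ℕ) ^ (2 * s + 4) < 2 ^ (3 * s + 6) := by
    have := h4
    rw [show ((3 : ℝ≥0∞)) = ((3 : ℕ) : ℝ≥0∞) by norm_num,
        show ((2 : ℝ≥0∞)) = ((2 : ℕ) : ℝ≥0∞) by norm_num,
        ← Nat.cast_pow, ← Nat.cast_pow, Nat.cast_lt] at this
    exact this
  have h6 : (2 : ℕ) ^ (3 * s + 6) ≤ 3 ^ (2 * s + 4) := by
    calc (2 : ℕ) ^ (3 * s + 6) = (2 ^ 3) ^ (s + 2) := by rw [← pow_mul]; ring_nf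
    _ ≤ (3 ^ 2) ^ (s + 2) := Nat.pow_le_pow_left (by norm_num) _
    _ = 3 ^ (2 * s + 4) := by rw [← pow_mul]; ring_nf
  omega
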